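/- arXiv:1509.04139 — 2 statements merged into one kernel-verified Lean document; each statement's English description precedes it below -/
import Mathlib

section
/- For β ∈ (0,1), a ∈ ℝ, and h continuously differentiable on [a,b], the Caputo derivative admits the generator-form representation D^β_{a+*}h(t) = (1/Γ(−β)) ∫₀^{t−a} (h(t−r) − h(t)) r^{−1−β} dr + (h(t) − h(a))/(Γ(1−β)(t−a)^β) for all t ∈ (a,b]. -/
/-- The Caputo fractional derivative of order `β ∈ (0,1)`. -/
noncomputable def caputoDeriv (a β : ℝ) (h : ℝ → ℝ) (t : ℝ) : ℝ :=
  (1 / Real.Gamma (1 - β)) * ∫ r in a..t, (t - r) ^ (-β) * deriv h r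

open MeasureTheory Filter Set intervalIntegral Topology

theorem caputo_generator_form (a b β : ℝ) (hab : a < b)
    (hβ : β ∈ Set.Ioo (0 : ℝ) 1) (h : ℝ → ℝ)
    (hh : ContDiffOn ℝ 1 h (Set.Icc a b)) :
    ∀ t ∈ Set.Ioc a b,
      caputoDeriv a β h t =
        (1 / Real.Gamma (-β)) *
          (∫ r in (0:ℝ)..(t - a), (h (t - r) - h t) * r ^ (-1 - β)) +
        (h t - h a) / (Real.Gamma (1 - β) * (t - a) ^ β) := by
  obtain ⟨hβ0, hβ1⟩ := hβ
  intro t ht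
  obtain ⟨hat, htb⟩ := ht
  set T := t - a with hTdef
  have hT : 0 < T := by rw [hTdef]; linarith
  -- bound on the derivative
  obtain ⟨M, hM⟩ := (isCompact_Icc (a := a) (b := b)).exists_bound_of_continuousOn
    (hh.continuousOn_derivWithin (uniqueDiffOn_Icc hab) le_rfl)
  have hM0 : 0 ≤ M := le_trans (norm_nonneg _) (hM a ⟨le_rfl, hab.le⟩)
  have hdiff : DifferentiableOn ℝ h (Set.Icc a b) := hh.differentiableOn one_ne_zero
  have hlip : ∀ x ∈ Set.Icc a b, ∀ y ∈ Set.Icc a b, |h y - h x| ≤ M * |y - x| := by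
    intro x hx y hy
    have := (convex_Icc a b).norm_image_sub_le_of_norm_derivWithin_le hdiff hM hx hy
    simpa [Real.norm_eq_abs] using this
  have hderiv_bound : ∀ x ∈ Set.Ioo a b, |deriv h x| ≤ M := by
    intro x hx
    rw [← derivWithin_of_mem_nhds (Icc_mem_nhds hx.1 hx.2)]
    simpa [Real.norm_eq_abs] using hM x (Set.mem_Icc_of_Ioo hx)
  have hhd : ∀ x ∈ Set.Ioo a b, HasDerivAt h (deriv h x) x := fun x hx =>
    ((hdiff x (Set.mem_Icc_of_Ioo hx)).differentiableAt (Icc_mem_nhds hx.1 hx.2)).hasDerivAt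
  have hmem : ∀ r ∈ Set.Ioo (0:ℝ) T, t - r ∈ Set.Ioo a b := by
    intro r hr
    constructor
    · have := hr.2; rw [hTdef] at this; linarith
    · have := hr.1; linarith
  have hmemc : ∀ r ∈ Set.Icc (0:ℝ) T, t - r ∈ Set.Icc a b := by
    intro r hr
    constructor
    · have := hr.2; rw [hTdef] at this; linarith
    · have := hr.1; linarith
  set f1 : ℝ → ℝ := fun r => r ^ (-β) * deriv h (t - r) with hf1
  set g : ℝ → ℝ := fun r => (h (t - r) - h t) * r ^ (-1 - β) with hg
  -- majorant
  have hmaj : IntegrableOn (fun r : ℝ => M * r ^ (-β)) (Set.Ioo 0 T) := by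
    rw [← intervalIntegrable_iff_integrableOn_Ioo_of_le hT.le]
    exact (intervalIntegral.intervalIntegrable_rpow'
      (by linarith : (-1:ℝ) < -β)).const_mul M
  have hrmul : ∀ r : ℝ, 0 < r → r ^ (-β) * r = r ^ (1 - β) := by
    intro r hr
    nth_rewrite 2 [← Real.rpow_one r]
    rw [← Real.rpow_add hr, show -β + 1 = 1 - β by ring]
  have hrmul2 : ∀ r : ℝ, 0 < r → r * r ^ (-1 - β) = r ^ (-β) := by
    intro r hr
    nth_rewrite 1 [← Real.rpow_one r]
    rw [← Real.rpow_add hr, show (1:ℝ) + (-1 - β) = -β by ring]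
  -- integrability of f1 on [0,T]
  have hf1I : IntervalIntegrable f1 volume 0 T := by
    rw [intervalIntegrable_iff_integrableOn_Ioo_of_le hT.le]
    refine hmaj.mono' ?_ ?_
    · apply Measurable.aestronglyMeasurable
      have h1 : Measurable (fun r : ℝ => r ^ (-β)) := by measurability
      exact h1.mul ((measurable_deriv h).comp (measurable_const.sub measurable_id))
    · filter_upwards [ae_restrict_mem measurableSet_Ioo] with r hr
      have hr0 : 0 < r := hr.1
      have hb := hderiv_bound _ (hmem r hr)
      have hrp : (0:ℝ) ≤ r ^ (-β) := Real.rpow_nonneg hr0.le _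
      rw [hf1, Real.norm_eq_abs, abs_mul, abs_of_nonneg hrp]
      calc r ^ (-β) * |deriv h (t - r)| ≤ r ^ (-β) * M :=
            mul_le_mul_of_nonneg_left hb hrp
        _ = M * r ^ (-β) := mul_comm _ _
  -- integrability of g on [0,T]
  have hgI : IntervalIntegrable g volume 0 T := by
    rw [intervalIntegrable_iff_integrableOn_Ioo_of_le hT.le]
    refine hmaj.mono' ?_ ?_
    · refine ContinuousOn.aestronglyMeasurable ?_ measurableSet_Ioo
      rw [hg]
      apply ContinuousOn.mul
      · apply ContinuousOn.sub _ continuousOn_const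
        exact hh.continuousOn.comp (continuous_const.sub continuous_id).continuousOn
          (fun r hr => hmemc r (Set.mem_Icc_of_Ioo hr))
      · intro r hr
        exact (Real.continuousAt_rpow_const r _ (Or.inl hr.1.ne')).continuousWithinAt
    · filter_upwards [ae_restrict_mem measurableSet_Ioo] with r hr
      have hr0 : 0 < r := hr.1
      have hrp : (0:ℝ) ≤ r ^ (-1 - β) := Real.rpow_nonneg hr0.le _
      have hl := hlip t (by simpa using hmemc 0 ⟨le_rfl, hT.le⟩) (t - r) (hmemc r (Set.mem_Icc_of_Ioo hr))
      have hl' : |h (t - r) - h t| ≤ M * r := by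
        have : |t - r - t| = r := by rw [abs_of_nonpos (by linarith)]; ring
        rw [this] at hl; simpa using hl
      rw [hg, Real.norm_eq_abs, abs_mul, abs_of_nonneg hrp]
      calc |h (t - r) - h t| * r ^ (-1 - β) ≤ (M * r) * r ^ (-1 - β) :=
            mul_le_mul_of_nonneg_right hl' hrp
        _ = M * (r * r ^ (-1 - β)) := by ring
        _ = M * r ^ (-β) := by rw [hrmul2 r hr0]
  -- step A: substitution r ↦ t - r
  have stepA : (∫ r in a..t, (t - r) ^ (-β) * deriv h r) = ∫ r in (0:ℝ)..T, f1 r := by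
    have h1 : (∫ x in a..t, f1 (t - x)) = ∫ x in (t - t)..(t - a), f1 x :=
      intervalIntegral.integral_comp_sub_left f1 t
    rw [sub_self, ← hTdef] at h1
    rw [← h1]
    apply intervalIntegral.integral_congr
    intro x _
    rw [hf1]
    simp
  set W : ℝ → ℝ := fun r => r ^ (-β) * (h (t - r) - h t) with hW
  -- step B: integration by parts on [ε, T]
  have key : ∀ ε ∈ Set.Ioo (0:ℝ) T,
      (∫ r in ε..T, f1 r) = (-β) * (∫ r in ε..T, g r) - W T + W ε := by
    intro ε hε
    have hsub : Set.uIcc ε T ⊆ Set.uIcc 0 T := by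
      rw [Set.uIcc_of_le hT.le, Set.uIcc_of_le hε.2.le]
      exact Set.Icc_subset_Icc hε.1.le le_rfl
    have hgI' : IntervalIntegrable g volume ε T := hgI.mono_set hsub
    have hf1I' : IntervalIntegrable f1 volume ε T := hf1I.mono_set hsub
    have hWcont : ContinuousOn W (Set.Icc ε T) := by
      rw [hW]
      apply ContinuousOn.mul
      · intro r hr
        exact (Real.continuousAt_rpow_const r _
          (Or.inl (lt_of_lt_of_le hε.1 hr.1).ne')).continuousWithinAt
      · apply ContinuousOn.sub _ continuousOn_const
        apply hh.continuousOn.comp (continuous_const.sub continuous_id).continuousOn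
        intro r hr
        exact hmemc r ⟨le_trans hε.1.le hr.1, hr.2⟩
    have hWderiv : ∀ r ∈ Set.Ioo ε T,
        HasDerivWithinAt W ((-β) * g r - f1 r) (Set.Ioi r) r := by
      intro r hr
      have hr0 : 0 < r := lt_trans hε.1 hr.1
      have hmr : t - r ∈ Set.Ioo a b := hmem r ⟨hr0, hr.2⟩
      have h1 : HasDerivAt (fun s : ℝ => s ^ (-β)) (-β * r ^ (-β - 1)) r :=
        Real.hasDerivAt_rpow_const (Or.inl hr0.ne')
      have h2 : HasDerivAt (fun s : ℝ => h (t - s) - h t) (-deriv h (t - r)) r := by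
        have hc : HasDerivAt (fun s : ℝ => t - s) (-1 : ℝ) r := by
          simpa using (hasDerivAt_id r).const_sub t
        have := (hhd _ hmr).comp r hc
        simp only [mul_neg_one] at this
        exact this.sub_const (h t)
      have h3 := h1.mul h2
      have heq : (-β * r ^ (-β - 1)) * (h (t - r) - h t) + r ^ (-β) * -deriv h (t - r)
          = (-β) * g r - f1 r := by
        rw [hg, hf1, show -β - 1 = -1 - β by ring]
        ring
      rw [hW]
      exact (heq ▸ h3).hasDerivWithinAt
    have hint : IntervalIntegrable (fun r => (-β) * g r - f1 r) volume ε T :=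
      (hgI'.const_mul (-β)).sub hf1I'
    have hftc := intervalIntegral.integral_eq_sub_of_hasDeriv_right_of_le hε.2.le
      hWcont hWderiv hint
    rw [intervalIntegral.integral_sub (hgI'.const_mul (-β)) hf1I',
      intervalIntegral.integral_const_mul] at hftc
    linarith
  -- limits as ε → 0⁺
  have hfilter : Set.Ioo (0:ℝ) T ∈ 𝓝[>] (0:ℝ) :=
    Ioo_mem_nhdsGT_of_mem ⟨le_rfl, hT⟩
  have tendI : ∀ ψ : ℝ → ℝ, IntervalIntegrable ψ volume 0 T →
      Tendsto (fun ε => ∫ r in ε..T, ψ r) (𝓝[>] (0:ℝ))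
        (𝓝 (∫ r in (0:ℝ)..T, ψ r)) := by
    intro ψ hψ
    have hIcc : IntegrableOn ψ (Set.uIcc 0 T) := by
      rw [Set.uIcc_of_le hT.le, integrableOn_Icc_iff_integrableOn_Ioc]
      exact (intervalIntegrable_iff_integrableOn_Ioc_of_le hT.le).mp hψ
    have hcont := intervalIntegral.continuousOn_primitive_interval hIcc
    have h0mem : (0:ℝ) ∈ Set.uIcc 0 T := Set.left_mem_uIcc
    have hc0 : Tendsto (fun x => ∫ r in (0:ℝ)..x, ψ r) (𝓝[Set.uIcc 0 T] (0:ℝ))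
        (𝓝 0) := by
      have := (hcont 0 h0mem).tendsto
      simpa using this
    have hle : 𝓝[>] (0:ℝ) ≤ 𝓝[Set.uIcc 0 T] (0:ℝ) := by
      apply le_trans (nhdsWithin_le_of_mem hfilter)
      apply nhdsWithin_mono
      rw [Set.uIcc_of_le hT.le]
      exact Set.Ioo_subset_Icc_self
    have hc0' := hc0.mono_left hle
    have heq : ∀ᶠ ε in 𝓝[>] (0:ℝ),
        (∫ r in (0:ℝ)..T, ψ r) - (∫ r in (0:ℝ)..ε, ψ r) = ∫ r in ε..T, ψ r := by
      filter_upwards [hfilter] with ε hε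
      have hsub1 : Set.uIcc 0 ε ⊆ Set.uIcc 0 T := by
        rw [Set.uIcc_of_le hT.le, Set.uIcc_of_le hε.1.le]
        exact Set.Icc_subset_Icc le_rfl hε.2.le
      have hsub2 : Set.uIcc ε T ⊆ Set.uIcc 0 T := by
        rw [Set.uIcc_of_le hT.le, Set.uIcc_of_le hε.2.le]
        exact Set.Icc_subset_Icc hε.1.le le_rfl
      have := intervalIntegral.integral_add_adjacent_intervals
        (hψ.mono_set hsub1) (hψ.mono_set hsub2)
      linarith
    have : Tendsto (fun ε => (∫ r in (0:ℝ)..T, ψ r) - ∫ r in (0:ℝ)..ε, ψ r)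
        (𝓝[>] (0:ℝ)) (𝓝 ((∫ r in (0:ℝ)..T, ψ r) - 0)) :=
      tendsto_const_nhds.sub hc0'
    rw [sub_zero] at this
    exact this.congr' heq
  -- W ε → 0
  have hWlim : Tendsto W (𝓝[>] (0:ℝ)) (𝓝 0) := by
    have hb : Tendsto (fun ε : ℝ => M * ε ^ (1 - β)) (𝓝[>] (0:ℝ)) (𝓝 0) := by
      have hc : ContinuousAt (fun x : ℝ => x ^ (1 - β)) 0 :=
        Real.continuousAt_rpow_const 0 _ (Or.inr (by linarith))
      have h0 : (0:ℝ) ^ (1 - β) = 0 := Real.zero_rpow (by linarith : (0:ℝ) < 1 - β).ne'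
      have h1 : Tendsto (fun x : ℝ => x ^ (1 - β)) (𝓝[>] (0:ℝ)) (𝓝 ((0:ℝ) ^ (1 - β))) :=
        hc.tendsto.mono_left nhdsWithin_le_nhds
      have h2 := h1.const_mul M
      rw [h0, mul_zero] at h2
      exact h2
    apply squeeze_zero_norm' _ hb
    filter_upwards [hfilter] with ε hε
    have hε0 : 0 < ε := hε.1
    have hl := hlip t (by simpa using hmemc 0 ⟨le_rfl, hT.le⟩) (t - ε) (hmemc ε (Set.mem_Icc_of_Ioo hε))
    have hl' : |h (t - ε) - h t| ≤ M * ε := by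
      have habs : |t - ε - t| = ε := by rw [abs_of_nonpos (by linarith)]; ring
      rw [habs] at hl; simpa using hl
    have hrp : (0:ℝ) ≤ ε ^ (-β) := Real.rpow_nonneg hε0.le _
    rw [hW, Real.norm_eq_abs, abs_mul, abs_of_nonneg hrp]
    calc ε ^ (-β) * |h (t - ε) - h t| ≤ ε ^ (-β) * (M * ε) :=
          mul_le_mul_of_nonneg_left hl' hrp
      _ = M * (ε ^ (-β) * ε) := by ring
      _ = M * ε ^ (1 - β) := by rw [hrmul ε hε0]
  -- combine limits
  have heq0 : (∫ r in (0:ℝ)..T, f1 r) = (-β) * (∫ r in (0:ℝ)..T, g r) - W T := by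
    have hR : Tendsto (fun ε => (-β) * (∫ r in ε..T, g r) - W T + W ε) (𝓝[>] (0:ℝ))
        (𝓝 ((-β) * (∫ r in (0:ℝ)..T, g r) - W T + 0)) :=
      (((tendI g hgI).const_mul (-β)).sub tendsto_const_nhds).add hWlim
    have hL : Tendsto (fun ε => ∫ r in ε..T, f1 r) (𝓝[>] (0:ℝ))
        (𝓝 ((-β) * (∫ r in (0:ℝ)..T, g r) - W T + 0)) := by
      apply hR.congr'
      filter_upwards [hfilter] with ε hε
      exact (key ε hε).symm
    have := tendsto_nhds_unique (tendI f1 hf1I) hL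
    rw [add_zero] at this
    exact this
  -- final algebra
  have hWT : W T = T ^ (-β) * (h a - h t) := by
    have h2 : t - T = a := by rw [hTdef]; ring
    simp only [hW, h2]
  have hβne : β ≠ 0 := hβ0.ne'
  have hΓβ : Real.Gamma (-β) ≠ 0 := by
    apply Real.Gamma_ne_zero
    intro m
    rcases Nat.eq_zero_or_pos m with hm | hm
    · subst hm; simpa using hβne
    · have : (1:ℝ) ≤ (m:ℝ) := by exact_mod_cast hm
      intro hc
      have : β = (m:ℝ) := by linarith [neg_injective hc]
      linarith
  have hΓ1 : Real.Gamma (1 - β) = -β * Real.Gamma (-β) := by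
    rw [show (1:ℝ) - β = -β + 1 by ring, Real.Gamma_add_one (neg_ne_zero.mpr hβne)]
  have hTβpos : (0:ℝ) < T ^ β := Real.rpow_pos_of_pos hT β
  have hTβ : T ^ (-β) = (T ^ β)⁻¹ := Real.rpow_neg hT.le β
  rw [caputoDeriv, stepA, heq0, hWT, hTβ, hΓ1]
  rw [show (∫ r in (0:ℝ)..T, (h (t - r) - h t) * r ^ (-1 - β)) = ∫ r in (0:ℝ)..T, g r
    from rfl]
  field_simp
  ring
end

section
/- For β ∈ (0,1), λ ∈ ℝ and a ∈ ℝ, the function u(t) = E_β(−λ(t−a)^β) solves the Caputo fractional differential equation D^β_{a+*} u(t) = −λ u(t) for t ∈ (a,b], with u(a) = 1. -/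
open MeasureTheory Real Set Filter intervalIntegral

/-- The (real) Mittag-Leffler function `E_β`. -/
noncomputable def mittagLeffler (β x : ℝ) : ℝ :=
  ∑' j : ℕ, x ^ j / Real.Gamma (j * β + 1)

lemma realBeta_intervalIntegrable {u v : ℝ} (hu : 0 < u) (hv : 0 < v) :
    IntervalIntegrable (fun x : ℝ => x ^ (u - 1) * (1 - x) ^ (v - 1)) volume 0 1 := by
  have hc := Complex.betaIntegral_convergent (u := (u : ℂ)) (v := (v : ℂ)) (by simpa) (by simpa)
  have hre : IntervalIntegrable (fun x : ℝ =>
      ((x : ℂ) ^ ((u : ℂ) - 1) * ((1 : ℂ) - x) ^ ((v : ℂ) - 1)).re) volume 0 1 := by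
    rw [intervalIntegrable_iff] at hc ⊢
    exact hc.re
  refine hre.congr ?_
  intro x hx
  beta_reduce
  rw [uIoc_of_le (by norm_num : (0:ℝ) ≤ 1)] at hx
  have hx0 : (0:ℝ) ≤ x := le_of_lt hx.1
  have hx1 : (0:ℝ) ≤ 1 - x := by linarith [hx.2]
  have e1 : ((x : ℂ) ^ ((u : ℂ) - 1)) = ((x ^ (u - 1) : ℝ) : ℂ) := by
    rw [Complex.ofReal_cpow hx0]; push_cast; ring_nf
  have e2 : (((1 : ℂ) - x) ^ ((v : ℂ) - 1)) = (((1 - x) ^ (v - 1) : ℝ) : ℂ) := by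
    rw [Complex.ofReal_cpow hx1]; push_cast; ring_nf
  rw [e1, e2, ← Complex.ofReal_mul, Complex.ofReal_re]

lemma realBeta_eq {u v : ℝ} (hu : 0 < u) (hv : 0 < v) :
    ∫ x in (0:ℝ)..1, x ^ (u - 1) * (1 - x) ^ (v - 1)
      = Real.Gamma u * Real.Gamma v / Real.Gamma (u + v) := by
  have key : ((∫ x in (0:ℝ)..1, x ^ (u - 1) * (1 - x) ^ (v - 1) : ℝ) : ℂ)
      = Complex.betaIntegral u v := by
    rw [← intervalIntegral.integral_ofReal, Complex.betaIntegral]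
    refine intervalIntegral.integral_congr fun x hx => ?_
    rw [uIcc_of_le (by norm_num : (0:ℝ) ≤ 1)] at hx
    have e1 : ((x : ℂ) ^ ((u : ℂ) - 1)) = ((x ^ (u - 1) : ℝ) : ℂ) := by
      rw [Complex.ofReal_cpow hx.1]; push_cast; ring_nf
    have e2 : (((1 : ℂ) - x) ^ ((v : ℂ) - 1)) = (((1 - x) ^ (v - 1) : ℝ) : ℂ) := by
      rw [Complex.ofReal_cpow (by linarith [hx.2] : (0:ℝ) ≤ 1 - x)]; push_cast; ring_nf
    rw [e1, e2, ← Complex.ofReal_mul]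
  have hG := Complex.Gamma_mul_Gamma_eq_betaIntegral
    (s := (u : ℂ)) (t := (v : ℂ)) (by simpa) (by simpa)
  have hGuv : Complex.Gamma ((u : ℂ) + v) ≠ 0 := by
    rw [← Complex.ofReal_add, Complex.Gamma_ofReal]
    exact_mod_cast (Real.Gamma_pos_of_pos (by linarith)).ne'
  have : Complex.betaIntegral u v = Complex.Gamma u * Complex.Gamma v / Complex.Gamma (u + v) := by
    rw [eq_div_iff hGuv, mul_comm (Complex.betaIntegral _ _)]; exact hG.symm
  rw [this] at key
  rw [← Complex.ofReal_add, Complex.Gamma_ofReal, Complex.Gamma_ofReal, Complex.Gamma_ofReal] at key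
  have : ((Real.Gamma u * Real.Gamma v / Real.Gamma (u + v) : ℝ) : ℂ)
      = (Real.Gamma u : ℂ) * Real.Gamma v / Real.Gamma (u + v) := by push_cast; ring
  rw [← this] at key
  exact_mod_cast key


lemma gamma_ratio {β : ℝ} (hβ1 : 0 < β) (hβ2 : β < 1) {x : ℝ} (hx : 0 < x) :
    Real.Gamma (x + 1) ≤ Real.Gamma (x + β) * (x + β) ^ (1 - β) := by
  have hxβ : 0 < x + β := by linarith
  have hcvx := Real.convexOn_log_Gamma.2 (mem_Ioi.2 hxβ) (mem_Ioi.2 (by linarith : (0:ℝ) < x + β + 1))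
    (le_of_lt hβ1) (by linarith : (0:ℝ) ≤ 1 - β) (by ring)
  have hpt : β • (x + β) + (1 - β) • (x + β + 1) = x + 1 := by simp [smul_eq_mul]; ring
  rw [hpt] at hcvx
  simp only [Function.comp_apply, smul_eq_mul] at hcvx
  have hG1 : Real.Gamma (x + β + 1) = (x + β) * Real.Gamma (x + β) := Real.Gamma_add_one hxβ.ne'
  rw [hG1, Real.log_mul hxβ.ne' (Real.Gamma_pos_of_pos hxβ).ne'] at hcvx
  have hlog : Real.log (Real.Gamma (x + 1)) ≤
      Real.log (Real.Gamma (x + β)) + (1 - β) * Real.log (x + β) := by nlinarith [hcvx]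
  have h1 := Real.exp_le_exp.2 hlog
  rw [Real.exp_log (Real.Gamma_pos_of_pos (by linarith : (0:ℝ) < x + 1)), Real.exp_add,
    Real.exp_log (Real.Gamma_pos_of_pos hxβ)] at h1
  rwa [Real.rpow_def_of_pos hxβ, mul_comm (Real.log (x + β))]

lemma ml_summable {β : ℝ} (hβ1 : 0 < β) (hβ2 : β < 1) (R : ℝ) (hR : 0 ≤ R) :
    Summable (fun j : ℕ => ((j : ℝ) + 1) * R ^ j / Real.Gamma (j * β + 1)) := by
  set f : ℕ → ℝ := fun j => ((j : ℝ) + 1) * R ^ j / Real.Gamma (j * β + 1) with hf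
  have hfpos : ∀ j : ℕ, 0 ≤ f j := fun j => by
    have := Real.Gamma_pos_of_pos (by positivity : (0:ℝ) < j * β + 1)
    positivity
  -- eventual bound on the ratio
  have htend : Tendsto (fun j : ℕ => 4 * R * ((j : ℝ) * β + 1) ^ (-β)) atTop (nhds 0) := by
    have h1 : Tendsto (fun j : ℕ => (j : ℝ) * β + 1) atTop atTop := by
      apply Filter.tendsto_atTop_add_const_right
      exact Tendsto.atTop_mul_const hβ1 tendsto_natCast_atTop_atTop
    have h2 := (tendsto_rpow_neg_atTop hβ1).comp h1
    have := h2.const_mul (4 * R)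
    simpa using this
  have hev : ∀ᶠ j : ℕ in atTop, 4 * R * ((j : ℝ) * β + 1) ^ (-β) < 1 / 2 :=
    htend.eventually_lt_const (by norm_num)
  refine summable_of_ratio_norm_eventually_le (r := 1/2) (by norm_num) ?_
  filter_upwards [hev] with j hj
  have hGpos : ∀ y : ℝ, 0 < y → 0 < Real.Gamma y := fun y hy => Real.Gamma_pos_of_pos hy
  have hG1 : (0:ℝ) < Real.Gamma ((j : ℝ) * β + 1) := hGpos _ (by positivity)
  have hG2 : (0:ℝ) < Real.Gamma (((j:ℝ) + 1) * β + 1) := hGpos _ (by positivity)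
  have hx : (0:ℝ) < (j : ℝ) * β + 1 := by positivity
  -- key Gamma inequality
  have hkey : ((j:ℝ) * β + 1) * Real.Gamma ((j : ℝ) * β + 1)
      ≤ Real.Gamma (((j:ℝ) + 1) * β + 1) * ((j:ℝ) * β + β + 1) ^ (1 - β) := by
    have := gamma_ratio hβ1 hβ2 hx
    rw [show (j:ℝ) * β + 1 + 1 = ((j:ℝ) * β + 1) + 1 by ring] at this
    rw [← Real.Gamma_add_one hx.ne']
    calc Real.Gamma (((j:ℝ) * β + 1) + 1)
        ≤ Real.Gamma ((j:ℝ) * β + 1 + β) * ((j:ℝ) * β + 1 + β) ^ (1 - β) := this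
      _ = Real.Gamma (((j:ℝ) + 1) * β + 1) * ((j:ℝ) * β + β + 1) ^ (1 - β) := by ring_nf
  -- bound the rpow factor
  have hP : ((j:ℝ) * β + β + 1) ^ (1 - β) ≤ 2 * ((j:ℝ) * β + 1) ^ (1 - β) := by
    have h1 : ((j:ℝ) * β + β + 1) ^ (1 - β) ≤ (2 * ((j:ℝ) * β + 1)) ^ (1 - β) := by
      have hjb : (0:ℝ) ≤ (j:ℝ) * β := by positivity
      apply Real.rpow_le_rpow (by positivity) (by nlinarith) (by linarith)
    have h2 : (2 * ((j:ℝ) * β + 1)) ^ (1 - β) = 2 ^ (1 - β) * ((j:ℝ) * β + 1) ^ (1 - β) :=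
      Real.mul_rpow (by norm_num) (by positivity)
    have h3 : (2:ℝ) ^ (1 - β) ≤ 2 := by
      calc (2:ℝ) ^ (1 - β) ≤ 2 ^ (1:ℝ) :=
        Real.rpow_le_rpow_of_exponent_le (by norm_num) (by linarith)
      _ = 2 := Real.rpow_one 2
    calc ((j:ℝ) * β + β + 1) ^ (1 - β) ≤ 2 ^ (1 - β) * ((j:ℝ) * β + 1) ^ (1 - β) := by
          rw [← h2]; exact h1
      _ ≤ 2 * ((j:ℝ) * β + 1) ^ (1 - β) := by
          have : (0:ℝ) ≤ ((j:ℝ) * β + 1) ^ (1 - β) := by positivity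
          nlinarith
  have hsplit : ((j:ℝ) * β + 1) ^ (1 - β) = ((j:ℝ) * β + 1) * ((j:ℝ) * β + 1) ^ (-β) := by
    rw [show (1 : ℝ) - β = 1 + (-β) by ring, Real.rpow_add hx, Real.rpow_one]
  -- main computation
  rw [Real.norm_of_nonneg (hfpos _), Real.norm_of_nonneg (hfpos _)]
  have hQ : (0:ℝ) ≤ ((j:ℝ) * β + 1) ^ (-β) := by positivity
  have hstep1 : f (j + 1) ≤
      ((j:ℝ) + 2) * R ^ (j+1) * (((j:ℝ) * β + β + 1) ^ (1 - β)) / (((j:ℝ)*β+1) * Real.Gamma ((j:ℝ)*β+1)) := by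
    rw [hf]
    simp only [Nat.cast_add, Nat.cast_one]
    rw [div_le_div_iff₀ hG2 (by positivity)]
    have hnum : (0:ℝ) ≤ ((j:ℝ) + 1 + 1) * R ^ (j+1) := by positivity
    calc ((j:ℝ) + 1 + 1) * R ^ (j + 1) * (((j:ℝ)*β+1) * Real.Gamma ((j:ℝ)*β+1))
        ≤ ((j:ℝ) + 1 + 1) * R ^ (j + 1) * (Real.Gamma (((j:ℝ) + 1) * β + 1) * ((j:ℝ) * β + β + 1) ^ (1 - β)) := by
          exact mul_le_mul_of_nonneg_left hkey hnum
      _ = ((j:ℝ) + 2) * R ^ (j+1) * ((j:ℝ) * β + β + 1) ^ (1 - β) * Real.Gamma (((j:ℝ) + 1) * β + 1) := by ring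
  have hRQ : 2*((j:ℝ)+2)*(R*((j:ℝ) * β + 1) ^ (-β)) ≤ 1/2*((j:ℝ)+1) := by
    have hj4 : R*((j:ℝ) * β + 1) ^ (-β) ≤ 1/8 := by nlinarith [hj.le]
    have hjn : (0:ℝ) ≤ (j:ℝ) := Nat.cast_nonneg j
    nlinarith [mul_le_mul_of_nonneg_left hj4 (show (0:ℝ) ≤ 2*((j:ℝ)+2) by linarith)]
  have hA : ((j:ℝ)+2) * R^(j+1) * (((j:ℝ)*β+β+1)^(1-β))
      ≤ 1/2 * (((j:ℝ)+1) * R^j) * ((j:ℝ)*β+1) := by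
    calc ((j:ℝ)+2) * R^(j+1) * (((j:ℝ)*β+β+1)^(1-β))
        ≤ ((j:ℝ)+2) * R^(j+1) * (2 * (((j:ℝ)*β+1) * ((j:ℝ) * β + 1) ^ (-β))) := by
          apply mul_le_mul_of_nonneg_left _ (by positivity)
          rw [← hsplit]; exact hP
      _ = (2*((j:ℝ)+2)*(R*((j:ℝ) * β + 1) ^ (-β))) * (R^j * ((j:ℝ)*β+1)) := by
          rw [pow_succ]; ring
      _ ≤ (1/2*((j:ℝ)+1)) * (R^j * ((j:ℝ)*β+1)) := by
          exact mul_le_mul_of_nonneg_right hRQ (by positivity)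
      _ = 1/2 * (((j:ℝ)+1) * R^j) * ((j:ℝ)*β+1) := by ring
  have hstep2 : ((j:ℝ) + 2) * R ^ (j+1) * (((j:ℝ) * β + β + 1) ^ (1 - β)) / (((j:ℝ)*β+1) * Real.Gamma ((j:ℝ)*β+1))
      ≤ (1/2) * f j := by
    rw [hf]
    simp only []
    rw [← div_div, show (1:ℝ)/2 * (((j:ℝ) + 1) * R ^ j / Real.Gamma ((j:ℝ) * β + 1))
        = (1/2 * (((j:ℝ) + 1) * R ^ j)) / Real.Gamma ((j:ℝ) * β + 1) by ring]
    gcongr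
    rw [div_le_iff₀ hx]
    exact hA
  calc f (j+1) ≤ _ := hstep1
    _ ≤ (1/2) * f j := hstep2


lemma hasDerivAt_mlterm (β l a : ℝ) (hβ1 : 0 < β) (j : ℕ) {y : ℝ} (hy : a < y) :
    HasDerivAt (fun s : ℝ => (-l * (s - a) ^ β) ^ j / Real.Gamma (j * β + 1))
      ((-l) ^ j * ((j : ℝ) * β) * (y - a) ^ ((j : ℝ) * β - 1) / Real.Gamma (j * β + 1)) y := by
  have hya : (0:ℝ) < y - a := by linarith
  obtain _ | k := j
  · have hfn : (fun s : ℝ => (-l * (s - a) ^ β) ^ (0:ℕ) / Real.Gamma ((0:ℕ) * β + 1))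
        = fun _ : ℝ => 1 / Real.Gamma ((0:ℕ) * β + 1) := by
      funext s; rw [pow_zero]
    rw [hfn]
    have : ((-l) ^ (0:ℕ) * (((0:ℕ) : ℝ) * β) * (y - a) ^ (((0:ℕ) : ℝ) * β - 1)
        / Real.Gamma ((0:ℕ) * β + 1)) = 0 := by push_cast; ring
    rw [this]
    exact hasDerivAt_const y _
  · have hinner : HasDerivAt (fun s : ℝ => -l * (s - a) ^ β) (-l * (β * (y - a) ^ (β - 1))) y := by
      have h1 : HasDerivAt (fun s : ℝ => s - a) 1 y := (hasDerivAt_id y).sub_const a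
      have h2 := (Real.hasDerivAt_rpow_const (x := y - a) (p := β) (Or.inl hya.ne')).comp y h1
      simpa using h2.const_mul (-l)
    have h3 := (hinner.pow (k + 1)).div_const (Real.Gamma ((k + 1 : ℕ) * β + 1))
    convert h3 using 1
    case e'_4 => rfl
    case e'_5 => rfl
    case e'_8 => rfl
    simp only [Nat.add_sub_cancel]
    have e1 : (-l * (y - a) ^ β) ^ k = (-l) ^ k * (y - a) ^ (β * k) := by
      rw [mul_pow, ← Real.rpow_natCast ((y - a) ^ β) k, ← Real.rpow_mul hya.le]
    rw [e1]
    push_cast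
    rw [show (-l) ^ (k + 1) * (((k:ℝ) + 1) * β) * (y - a) ^ (((k:ℝ) + 1) * β - 1)
        = (-l) ^ (k + 1) * (((k:ℝ) + 1) * β) * (y - a) ^ (β * (k:ℝ) + (β - 1)) by ring_nf]
    rw [Real.rpow_add hya]
    ring

lemma mlterm_norm_bound (β l a : ℝ) (hβ1 : 0 < β) (hβ2 : β < 1) {c M : ℝ} (hac : a < c)
    (j : ℕ) {y : ℝ} (hy : y ∈ Set.Ioo c M) :
    ‖(-l) ^ j * ((j : ℝ) * β) * (y - a) ^ ((j : ℝ) * β - 1) / Real.Gamma (j * β + 1)‖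
      ≤ (β / (c - a)) * (((j:ℝ) + 1) * (|l| * max (M - a) 1) ^ j / Real.Gamma (j * β + 1)) := by
  set K := max (M - a) 1 with hK
  have hK1 : (1:ℝ) ≤ K := le_max_right _ _
  have hya : (0:ℝ) < y - a := by have := hy.1; linarith
  have hyM : y - a ≤ M - a := by have := hy.2; linarith
  have hGpos := Real.Gamma_pos_of_pos (show (0:ℝ) < (j:ℝ) * β + 1 by positivity)
  have hca : (0:ℝ) < c - a := by linarith
  -- norm computation
  rw [norm_div, norm_mul, norm_mul, norm_pow, norm_neg, Real.norm_eq_abs, Real.norm_eq_abs,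
    Real.norm_eq_abs, Real.norm_eq_abs, abs_of_nonneg (by positivity : (0:ℝ) ≤ (j:ℝ) * β),
    abs_of_nonneg (Real.rpow_nonneg hya.le _), abs_of_pos hGpos]
  rw [← mul_div_assoc, div_le_div_iff₀ hGpos hGpos]
  apply mul_le_mul_of_nonneg_right _ hGpos.le
  -- key: (y-a)^(jβ-1) ≤ K^j / (c-a)
  have hsplit : (y - a) ^ ((j:ℝ) * β - 1) = (y - a) ^ ((j:ℝ) * β) * (y - a)⁻¹ := by
    rw [show (j:ℝ) * β - 1 = (j:ℝ) * β + (-1) by ring, Real.rpow_add hya, Real.rpow_neg_one]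
  have h1 : (y - a) ^ ((j:ℝ) * β) ≤ K ^ j := by
    calc (y - a) ^ ((j:ℝ) * β) ≤ K ^ ((j:ℝ) * β) :=
          Real.rpow_le_rpow hya.le (hyM.trans (le_max_left _ _)) (by positivity)
      _ ≤ K ^ ((j:ℝ)) := Real.rpow_le_rpow_of_exponent_le hK1
          (by nlinarith [Nat.cast_nonneg (α := ℝ) j])
      _ = K ^ j := Real.rpow_natCast K j
  have h2 : (y - a)⁻¹ ≤ (c - a)⁻¹ := by
    apply inv_anti₀ hca
    have := hy.1; linarith
  calc |l| ^ j * ((j:ℝ) * β) * (y - a) ^ ((j : ℝ) * β - 1)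
      ≤ |l| ^ j * ((j:ℝ) * β) * (K ^ j * (c - a)⁻¹) := by
        rw [hsplit]
        apply mul_le_mul_of_nonneg_left _ (by positivity)
        apply mul_le_mul h1 h2 (by positivity) (by positivity)
    _ = (β / (c - a)) * ((j:ℝ) * (|l| ^ j * K ^ j)) := by
        field_simp
    _ ≤ (β / (c - a)) * (((j:ℝ) + 1) * (|l| * K) ^ j) := by
        apply mul_le_mul_of_nonneg_left _ (by positivity)
        rw [mul_pow]
        apply mul_le_mul_of_nonneg_right (by linarith) (by positivity)

lemma deriv_ml (β l a : ℝ) (hβ1 : 0 < β) (hβ2 : β < 1) {r : ℝ} (hr : a < r) :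
    deriv (fun s : ℝ => ∑' j : ℕ, (-l * (s - a) ^ β) ^ j / Real.Gamma (j * β + 1)) r
      = ∑' j : ℕ, (-l) ^ j * ((j : ℝ) * β) * (r - a) ^ ((j : ℝ) * β - 1)
          / Real.Gamma (j * β + 1) := by
  set c := (a + r) / 2 with hc
  set M := r + 1 with hM
  have hac : a < c := by rw [hc]; linarith
  have hcr : c < r := by rw [hc]; linarith
  have hrM : r < M := by rw [hM]; linarith
  set u : ℕ → ℝ := fun j =>
    (β / (c - a)) * (((j:ℝ) + 1) * (|l| * max (M - a) 1) ^ j / Real.Gamma (j * β + 1)) with hu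
  have hus : Summable u := by
    have := (ml_summable hβ1 hβ2 (|l| * max (M - a) 1) (by positivity)).mul_left (β / (c - a))
    simpa [hu, mul_div_assoc] using this
  have hderiv := hasDerivAt_tsum_of_isPreconnected hus isOpen_Ioo
    (isPreconnected_Ioo (a := c) (b := M))
    (fun j y hy => hasDerivAt_mlterm β l a hβ1 j (lt_trans hac hy.1))
    (fun j y hy => mlterm_norm_bound β l a hβ1 hβ2 hac j hy)
    (Set.mem_Ioo.2 ⟨hcr, hrM⟩)
    (by
      -- summability of the series at r
      apply Summable.of_norm_bounded (ml_summable hβ1 hβ2 (|l| * (r - a) ^ β) (mul_nonneg (abs_nonneg l) (Real.rpow_nonneg (by linarith) β)))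
      intro j
      have hGpos := Real.Gamma_pos_of_pos (show (0:ℝ) < (j:ℝ) * β + 1 by positivity)
      rw [norm_div, norm_pow, Real.norm_eq_abs, Real.norm_eq_abs, abs_of_pos hGpos]
      rw [div_le_div_iff₀ hGpos hGpos]
      apply mul_le_mul_of_nonneg_right _ hGpos.le
      have : |(-l * (r - a) ^ β)| = |l| * (r - a) ^ β := by
        rw [abs_mul, abs_neg, abs_of_nonneg (Real.rpow_nonneg (by linarith) β)]
      rw [this]
      nlinarith [pow_nonneg (mul_nonneg (abs_nonneg l) (Real.rpow_nonneg (show (0:ℝ) ≤ r - a by linarith) β)) j,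
        Nat.cast_nonneg (α := ℝ) j])
    (Set.mem_Ioo.2 ⟨hcr, hrM⟩)
  exact hderiv.deriv



section betaAB
variable {β v a t : ℝ}

lemma pointwise_sub (hat : a < t) (hβ1 : 0 < β) {r : ℝ} (hr : r ∈ Set.Icc a t) :
    (t - r) ^ (-β) * (r - a) ^ (v - 1)
      = (t - a) ^ (-β) * (t - a) ^ (v - 1)
        * (((r - a) / (t - a)) ^ (v - 1) * (1 - (r - a) / (t - a)) ^ (-β)) := by
  have hT : (0:ℝ) < t - a := by linarith
  have hra : (0:ℝ) ≤ r - a := by linarith [hr.1]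
  have htr : (0:ℝ) ≤ t - r := by linarith [hr.2]
  have hx : (0:ℝ) ≤ (r - a) / (t - a) := div_nonneg hra hT.le
  have hx1 : (0:ℝ) ≤ 1 - (r - a) / (t - a) := by
    rw [sub_nonneg, div_le_one hT]; linarith [hr.2]
  set x := (r - a) / (t - a) with hxdef
  have e1 : r - a = (t - a) * x := by rw [hxdef]; field_simp
  have e2 : t - r = (t - a) * (1 - x) := by rw [hxdef]; field_simp; ring
  rw [e1, e2, Real.mul_rpow hT.le hx1, Real.mul_rpow hT.le hx]
  ring

lemma betaAB_integrable (hat : a < t) (hβ1 : 0 < β) (hβ2 : β < 1) (hv : 0 < v) :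
    IntervalIntegrable (fun r : ℝ => (t - r) ^ (-β) * (r - a) ^ (v - 1)) volume a t := by
  have hT : (0:ℝ) < t - a := by linarith
  have h0 : IntervalIntegrable (fun x : ℝ => x ^ (v - 1) * (1 - x) ^ (-β)) volume 0 1 := by
    have := realBeta_intervalIntegrable hv (show (0:ℝ) < 1 - β by linarith)
    simpa [show (1:ℝ) - β - 1 = -β by ring] using this
  have h1 := h0.comp_mul_left (c := (t - a)⁻¹)
  rw [div_inv_eq_mul, div_inv_eq_mul, zero_mul, one_mul] at h1
  have h2 := h1.comp_sub_right a
  rw [zero_add, show t - a + a = t by ring] at h2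
  have h3 := (h2.const_mul ((t - a) ^ (-β) * (t - a) ^ (v - 1)))
  apply h3.congr
  intro r hr
  beta_reduce
  rw [Set.uIoc_of_le hat.le] at hr
  have hmem : r ∈ Set.Icc a t := ⟨hr.1.le, hr.2⟩
  rw [pointwise_sub hat hβ1 hmem,
    show (t - a)⁻¹ * (r - a) = (r - a) / (t - a) from inv_mul_eq_div _ _]

lemma betaAB_eq (hat : a < t) (hβ1 : 0 < β) (hβ2 : β < 1) (hv : 0 < v) :
    ∫ r in a..t, (t - r) ^ (-β) * (r - a) ^ (v - 1)
      = Real.Gamma v * Real.Gamma (1 - β) / Real.Gamma (v + (1 - β)) * (t - a) ^ (v - β) := by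
  have hT : (0:ℝ) < t - a := by linarith
  have step1 : ∫ r in a..t, (t - r) ^ (-β) * (r - a) ^ (v - 1)
      = (t - a) ^ (-β) * (t - a) ^ (v - 1)
        * ∫ r in a..t, (((t-a)⁻¹ * r + -(a / (t-a))) ^ (v - 1)
            * (1 - ((t-a)⁻¹ * r + -(a / (t-a)))) ^ (-β)) := by
    rw [← intervalIntegral.integral_const_mul]
    apply intervalIntegral.integral_congr
    intro r hr
    rw [Set.uIcc_of_le hat.le] at hr
    show (t - r) ^ (-β) * (r - a) ^ (v - 1)
      = (t - a) ^ (-β) * (t - a) ^ (v - 1)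
        * (((t-a)⁻¹ * r + -(a / (t-a))) ^ (v - 1) * (1 - ((t-a)⁻¹ * r + -(a / (t-a)))) ^ (-β))
    rw [pointwise_sub hat hβ1 hr]
    rw [show (t-a)⁻¹ * r + -(a / (t-a)) = (r - a) / (t - a) by
      rw [inv_mul_eq_div, ← sub_eq_add_neg, div_sub_div_same]]
  rw [step1]
  rw [intervalIntegral.integral_comp_mul_add
      (fun x : ℝ => x ^ (v - 1) * (1 - x) ^ (-β)) (inv_ne_zero hT.ne') (-(a / (t-a)))]
  rw [show (t-a)⁻¹ * a + -(a / (t-a)) = 0 by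
    rw [inv_mul_eq_div, ← sub_eq_add_neg, div_sub_div_same, sub_self, zero_div]]
  rw [show (t-a)⁻¹ * t + -(a / (t-a)) = 1 by
    rw [inv_mul_eq_div, ← sub_eq_add_neg, div_sub_div_same, div_self hT.ne']]
  have hbeta : ∫ x in (0:ℝ)..1, x ^ (v - 1) * (1 - x) ^ (-β)
      = Real.Gamma v * Real.Gamma (1 - β) / Real.Gamma (v + (1 - β)) := by
    have := realBeta_eq hv (show (0:ℝ) < 1 - β by linarith)
    simpa [show (1:ℝ) - β - 1 = -β by ring] using this
  rw [hbeta, inv_inv, smul_eq_mul]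
  rw [show (t - a) ^ (-β) * (t - a) ^ (v - 1) * ((t - a) *
      (Real.Gamma v * Real.Gamma (1 - β) / Real.Gamma (v + (1 - β))))
    = Real.Gamma v * Real.Gamma (1 - β) / Real.Gamma (v + (1 - β))
      * ((t - a) ^ (-β) * (t - a) ^ (v - 1) * (t - a)) by ring]
  congr 1
  rw [← Real.rpow_add hT (-β) (v - 1), ← Real.rpow_add_one hT.ne']
  congr 1
  ring
end betaAB

theorem mittagLeffler_solves_caputo (β l a b : ℝ) (hβ : β ∈ Set.Ioo (0 : ℝ) 1)
    (hab : a < b) :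
    (∀ t ∈ Set.Ioc a b,
      caputoDeriv a β (fun s => mittagLeffler β (-l * (s - a) ^ β)) t =
        -l * mittagLeffler β (-l * (t - a) ^ β)) ∧
    mittagLeffler β (-l * ((a : ℝ) - a) ^ β) = 1 := by
  obtain ⟨hβ1, hβ2⟩ := hβ
  constructor
  · intro t ht
    obtain ⟨hat, _⟩ := ht
    have hT : (0:ℝ) < t - a := by linarith
    have hG1β : (0:ℝ) < Real.Gamma (1 - β) := Real.Gamma_pos_of_pos (by linarith)
    -- the summand functions after applying the derivative
    set F : ℕ → ℝ → ℝ := fun j r =>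
      (t - r) ^ (-β) * ((-l) ^ j * ((j : ℝ) * β) * (r - a) ^ ((j : ℝ) * β - 1)
        / Real.Gamma (j * β + 1)) with hF
    -- Step 1: rewrite the integral as an integral over Ioo a t of a tsum
    have step1 : (∫ r in a..t,
        (t - r) ^ (-β) * deriv (fun s => mittagLeffler β (-l * (s - a) ^ β)) r)
        = ∫ r in Ioo a t, ∑' j : ℕ, F j r := by
      rw [intervalIntegral.integral_of_le hat.le, ← restrict_Ioo_eq_restrict_Ioc]
      apply setIntegral_congr_fun measurableSet_Ioo
      intro r hr
      simp only [mittagLeffler]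
      rw [deriv_ml β l a hβ1 hβ2 hr.1, ← tsum_mul_left]
    -- integrability data for each j ≥ 1
    have hIIj : ∀ k : ℕ, IntervalIntegrable
        (fun r : ℝ => (t - r) ^ (-β) * (r - a) ^ (((k:ℝ)+1) * β - 1)) volume a t := by
      intro k
      have := betaAB_integrable (v := ((k:ℝ)+1) * β) hat hβ1 hβ2 (by positivity)
      convert this using 3
    have hFint : ∀ j : ℕ, IntegrableOn (F j) (Ioo a t) volume := by
      intro j
      rw [IntegrableOn, restrict_Ioo_eq_restrict_Ioc]
      obtain _ | k := j
      · have : F 0 = fun _ : ℝ => 0 := by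
          funext r; simp [hF]
        rw [this]
        exact integrable_zero _ _ _
      · have h2 := ((hIIj k).const_mul
          ((-l) ^ (k+1) * (((k:ℝ)+1) * β) / Real.Gamma ((k+1 : ℕ) * β + 1)))
        have h3 := (intervalIntegrable_iff_integrableOn_Ioc_of_le hat.le).mp h2
        apply h3.congr_fun _ measurableSet_Ioc
        intro r hr
        simp only [hF]
        push_cast
        ring
    -- value of each integral
    have hval : ∀ k : ℕ, ∫ r in Ioo a t, F (k+1) r
        = (-l) ^ (k+1) * Real.Gamma (1 - β) * (t - a) ^ ((k:ℝ) * β)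
            / Real.Gamma ((k:ℝ) * β + 1) := by
      intro k
      have hv : (0:ℝ) < ((k:ℝ)+1) * β := by positivity
      have hrewrite : ∫ r in Ioo a t, F (k+1) r
          = ((-l) ^ (k+1) * (((k:ℝ)+1) * β) / Real.Gamma ((k+1 : ℕ) * β + 1))
            * ∫ r in a..t, (t - r) ^ (-β) * (r - a) ^ (((k:ℝ)+1) * β - 1) := by
        rw [intervalIntegral.integral_of_le hat.le, ← restrict_Ioo_eq_restrict_Ioc,
          ← MeasureTheory.integral_const_mul]
        apply setIntegral_congr_fun measurableSet_Ioo
        intro r hr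
        simp only [hF]
        push_cast
        ring
      rw [hrewrite, betaAB_eq hat hβ1 hβ2 hv]
      have hGam : (((k:ℝ)+1) * β) * Real.Gamma (((k:ℝ)+1) * β)
          = Real.Gamma (((k:ℝ)+1) * β + 1) := (Real.Gamma_add_one hv.ne').symm
      have hGpos1 : (0:ℝ) < Real.Gamma (((k:ℝ)+1) * β) := Real.Gamma_pos_of_pos hv
      have hGpos2 : (0:ℝ) < Real.Gamma (((k:ℝ)+1) * β + 1) := Real.Gamma_pos_of_pos (by linarith)
      have hGpos3 : (0:ℝ) < Real.Gamma (((k:ℝ)+1) * β + (1 - β)) :=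
        Real.Gamma_pos_of_pos (by nlinarith)
      have hexp1 : ((k:ℝ)+1) * β + (1 - β) = (k:ℝ) * β + 1 := by ring
      have hexp2 : ((k:ℝ)+1) * β - β = (k:ℝ) * β := by ring
      have hcast : ((k+1 : ℕ) : ℝ) * β + 1 = ((k:ℝ)+1) * β + 1 := by push_cast; ring
      rw [hcast, hexp1, hexp2]
      rw [← hGam]
      field_simp
    -- the norms of the integrals
    have hnormval : ∀ k : ℕ, ∫ r in Ioo a t, ‖F (k+1) r‖
        = |l| ^ (k+1) * Real.Gamma (1 - β) * (t - a) ^ ((k:ℝ) * β)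
            / Real.Gamma ((k:ℝ) * β + 1) := by
      intro k
      have hv : (0:ℝ) < ((k:ℝ)+1) * β := by positivity
      have hGpos2 : (0:ℝ) < Real.Gamma ((k+1 : ℕ) * β + 1) :=
        Real.Gamma_pos_of_pos (by push_cast; positivity)
      have hrewrite : ∫ r in Ioo a t, ‖F (k+1) r‖
          = (|l| ^ (k+1) * (((k:ℝ)+1) * β) / Real.Gamma ((k+1 : ℕ) * β + 1))
            * ∫ r in a..t, (t - r) ^ (-β) * (r - a) ^ (((k:ℝ)+1) * β - 1) := by
        rw [intervalIntegral.integral_of_le hat.le, ← restrict_Ioo_eq_restrict_Ioc,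
          ← MeasureTheory.integral_const_mul]
        apply setIntegral_congr_fun measurableSet_Ioo
        intro r hr
        have htr : (0:ℝ) < t - r := by linarith [hr.2]
        have hra : (0:ℝ) < r - a := by linarith [hr.1]
        simp only [hF]
        rw [norm_mul, norm_div, norm_mul, norm_mul, norm_pow, norm_neg,
          Real.norm_eq_abs, Real.norm_eq_abs, Real.norm_eq_abs, Real.norm_eq_abs,
          Real.norm_eq_abs,
          abs_of_nonneg (Real.rpow_nonneg htr.le _),
          abs_of_nonneg (Real.rpow_nonneg hra.le _),
          abs_of_nonneg (by push_cast; positivity : (0:ℝ) ≤ ((k+1 : ℕ) : ℝ) * β),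
          abs_of_pos hGpos2]
        push_cast
        ring
      rw [hrewrite, betaAB_eq hat hβ1 hβ2 hv]
      have hGam : (((k:ℝ)+1) * β) * Real.Gamma (((k:ℝ)+1) * β)
          = Real.Gamma (((k:ℝ)+1) * β + 1) := (Real.Gamma_add_one hv.ne').symm
      have hGpos1 : (0:ℝ) < Real.Gamma (((k:ℝ)+1) * β) := Real.Gamma_pos_of_pos hv
      have hGpos3 : (0:ℝ) < Real.Gamma (((k:ℝ)+1) * β + (1 - β)) :=
        Real.Gamma_pos_of_pos (by nlinarith)
      have hexp1 : ((k:ℝ)+1) * β + (1 - β) = (k:ℝ) * β + 1 := by ring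
      have hexp2 : ((k:ℝ)+1) * β - β = (k:ℝ) * β := by ring
      have hcast : ((k+1 : ℕ) : ℝ) * β + 1 = ((k:ℝ)+1) * β + 1 := by push_cast; ring
      rw [hcast, hexp1, hexp2, ← hGam]
      have hGpos2' : (0:ℝ) < Real.Gamma ((k:ℝ) * β + 1) :=
        Real.Gamma_pos_of_pos (by positivity)
      field_simp
    -- summability of the norm integrals
    set N : ℕ → ℝ := fun j => ∫ r in Ioo a t, ‖F j r‖ with hNdef
    have hF0 : F 0 = fun _ : ℝ => 0 := by funext r; simp [hF]
    have hN0 : N 0 = 0 := by rw [hNdef]; simp [hF0]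
    have hNnonneg : ∀ j, 0 ≤ N j := fun j => integral_nonneg fun r => norm_nonneg _
    have hpowsplit : ∀ k : ℕ, (t - a) ^ ((k:ℝ) * β) = ((t - a) ^ β) ^ k := by
      intro k
      rw [show (k:ℝ) * β = β * (k:ℝ) by ring, Real.rpow_mul hT.le, Real.rpow_natCast]
    have hNsum : Summable N := by
      rw [← summable_nat_add_iff 1]
      have hmaster := (ml_summable hβ1 hβ2 (|l| * (t - a) ^ β)
        (by positivity)).mul_left (|l| * Real.Gamma (1 - β))
      apply Summable.of_nonneg_of_le (fun k => hNnonneg (k+1)) _ hmaster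
      intro k
      rw [hNdef]
      simp only []
      rw [hnormval k]
      have hGpos : (0:ℝ) < Real.Gamma ((k:ℝ) * β + 1) := Real.Gamma_pos_of_pos (by positivity)
      rw [hpowsplit k, pow_succ, mul_pow,
        show |l| * Real.Gamma (1 - β) * (((k:ℝ) + 1) * (|l| ^ k * ((t - a) ^ β) ^ k)
            / Real.Gamma ((k:ℝ) * β + 1))
          = |l| * Real.Gamma (1 - β) * (((k:ℝ) + 1) * (|l| ^ k * ((t - a) ^ β) ^ k))
            / Real.Gamma ((k:ℝ) * β + 1) by ring]
      rw [div_le_div_iff₀ hGpos hGpos]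
      apply mul_le_mul_of_nonneg_right _ hGpos.le
      nlinarith [mul_nonneg (mul_nonneg (mul_nonneg (abs_nonneg l) hG1β.le)
        (pow_nonneg (abs_nonneg l) k)) (pow_nonneg (Real.rpow_nonneg hT.le β) k),
        Nat.cast_nonneg (α := ℝ) k]
    -- interchange sum and integral
    have hmeas : ∀ j : ℕ, AEStronglyMeasurable (F j) (volume.restrict (Ioo a t)) :=
      fun j => (hFint j).aestronglyMeasurable
    have hlint : ∑' j : ℕ, ∫⁻ r in Ioo a t, ‖F j r‖₊ ≠ ⊤ := by
      have heq : ∀ j : ℕ, ∫⁻ r in Ioo a t, ‖F j r‖₊ = ENNReal.ofReal (N j) := by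
        intro j
        rw [hNdef]
        exact (ofReal_integral_norm_eq_lintegral_enorm (hFint j)).symm
      simp only [heq]
      rw [← ENNReal.ofReal_tsum_of_nonneg hNnonneg hNsum]
      exact ENNReal.ofReal_ne_top
    have step2 : ∫ r in Ioo a t, ∑' j : ℕ, F j r = ∑' j : ℕ, ∫ r in Ioo a t, F j r :=
      integral_tsum hmeas hlint
    -- summability of the integrals and reindexing
    have hIsum : Summable (fun j : ℕ => ∫ r in Ioo a t, F j r) := by
      apply Summable.of_norm_bounded hNsum
      intro j
      exact norm_integral_le_integral_norm _
    have hI0 : ∫ r in Ioo a t, F 0 r = 0 := by rw [hF0]; simp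
    have step3 : ∑' j : ℕ, ∫ r in Ioo a t, F j r
        = (-l * Real.Gamma (1 - β)) * ∑' k : ℕ, (-l * (t - a) ^ β) ^ k
            / Real.Gamma ((k:ℝ) * β + 1) := by
      rw [hIsum.tsum_eq_zero_add, hI0, zero_add, ← tsum_mul_left]
      apply tsum_congr
      intro k
      have hGpos : (0:ℝ) < Real.Gamma ((k:ℝ) * β + 1) := Real.Gamma_pos_of_pos (by positivity)
      rw [hval k, hpowsplit k, mul_pow, pow_succ]
      field_simp [hGpos.ne']
    -- put everything together
    show (1 / Real.Gamma (1 - β)) * (∫ r in a..t,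
        (t - r) ^ (-β) * deriv (fun s => mittagLeffler β (-l * (s - a) ^ β)) r)
      = -l * mittagLeffler β (-l * (t - a) ^ β)
    rw [step1, step2, step3]
    show 1 / Real.Gamma (1 - β) * (-l * Real.Gamma (1 - β)
        * ∑' k : ℕ, (-l * (t - a) ^ β) ^ k / Real.Gamma ((k:ℝ) * β + 1))
      = -l * ∑' j : ℕ, (-l * (t - a) ^ β) ^ j / Real.Gamma ((j:ℝ) * β + 1)
    field_simp
  · have h0 : -l * ((a:ℝ) - a) ^ β = 0 := by
      rw [sub_self, Real.zero_rpow hβ1.ne', mul_zero]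
    rw [h0, mittagLeffler]
    rw [tsum_eq_single 0 (by
      intro j hj
      rw [zero_pow hj, zero_div])]
    norm_num [Real.Gamma_one]
end
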